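/- Let B be a nonzero Ξ-algebra that is Ξ-simple, i.e. B contains no closed translation-invariant (two-sided) ideals other than {0} and B itself (equivalently, the Gelfand spectrum of B with its induced Ξ-action is a minimal dynamical system). Then either B = C₀(Ξ) or B is of the second kind, i.e. B ∩ C₀(Ξ) = {0}. -/

import Mathlib

open Filter Topology OnePoint
section
variable {E : Type*} [NormedAddCommGroup E]

lemma isClosed_C0set : IsClosed {f : BoundedContinuousFunction E ℂ |
    Tendsto (f : E → ℂ) (cocompact E) (𝓝 0)} := by
  refine isClosed_of_closure_subset fun f hf => ?_
  simp only [Set.mem_setOf_eq, Metric.tendsto_nhds]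
  intro ε hε
  rcases Metric.mem_closure_iff.1 hf (ε/2) (by positivity) with ⟨g, hg, hdist⟩
  filter_upwards [Metric.tendsto_nhds.1 hg (ε/2) (by positivity)] with x hx
  calc dist (f x) 0 ≤ dist (f x) (g x) + dist (g x) 0 := dist_triangle _ _ _
    _ < ε/2 + ε/2 :=
      add_lt_add_of_le_of_lt ((BoundedContinuousFunction.dist_coe_le_dist x).trans hdist.le) hx
    _ = ε := by ring

lemma translate_C0 {f g : BoundedContinuousFunction E ℂ} (X : E)
    (hf : Tendsto (f : E → ℂ) (cocompact E) (𝓝 0)) (hg : ∀ Y, g Y = f (Y + X)) :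
    Tendsto (g : E → ℂ) (cocompact E) (𝓝 0) := by
  have ht : Tendsto (fun Y : E => Y + X) (cocompact E) (cocompact E) :=
    (Homeomorph.addRight X).isClosedEmbedding.tendsto_cocompact
  exact (hf.comp ht).congr fun Y => (hg Y).symm

/-- extension by zero at infinity -/
noncomputable def extC0 (f : BoundedContinuousFunction E ℂ)
    (hf : Tendsto (f : E → ℂ) (cocompact E) (𝓝 0)) : C(OnePoint E, ℂ) :=
  OnePoint.continuousMapMk f.toContinuousMap 0
    (by rwa [Filter.coclosedCompact_eq_cocompact])

@[simp] lemma extC0_coe (f : BoundedContinuousFunction E ℂ) (hf) (x : E) :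
    extC0 f hf x = f x := rfl
@[simp] lemma extC0_infty (f : BoundedContinuousFunction E ℂ) (hf) :
    extC0 f hf ∞ = 0 := rfl

variable [ProperSpace E]

/-- restriction -/
noncomputable def restr (h : C(OnePoint E, ℂ)) : BoundedContinuousFunction E ℂ :=
  BoundedContinuousFunction.ofNormedAddCommGroup (fun x : E => h x)
    (h.continuous.comp OnePoint.continuous_coe) ‖h‖ (fun x => h.norm_coe_le_norm _)

@[simp] lemma restr_coe (h : C(OnePoint E, ℂ)) (x : E) : restr h x = h x := rfl

lemma lipschitz_restr : LipschitzWith 1 (restr (E := E)) := by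
  refine LipschitzWith.of_dist_le_mul fun h₁ h₂ => ?_
  rw [NNReal.coe_one, one_mul]
  refine (BoundedContinuousFunction.dist_le dist_nonneg).2 fun x => ?_
  show dist (h₁ (x : OnePoint E)) (h₂ (x : OnePoint E)) ≤ dist h₁ h₂
  exact ContinuousMap.dist_apply_le_dist _

@[simp] lemma restr_extC0 (f : BoundedContinuousFunction E ℂ) (hf) :
    restr (extC0 f hf) = f := by ext x; rfl

lemma extC0_restr (h : C(OnePoint E, ℂ)) (h0 : h ∞ = 0) (hv) : extC0 (restr h) hv = h := by
  ext x
  induction x using OnePoint.rec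
  · simpa using h0.symm
  · rfl
end

section main
variable {E : Type*} [NormedAddCommGroup E] [NormedSpace ℝ E] [ProperSpace E]

-- identities for g h := restr h - h ∞ • 1
noncomputable def gpart (h : C(OnePoint E, ℂ)) : BoundedContinuousFunction E ℂ :=
  restr h - h ∞ • 1

lemma gpart_add (h₁ h₂ : C(OnePoint E, ℂ)) : gpart (h₁ + h₂) = gpart h₁ + gpart h₂ := by
  ext x; simp [gpart]; ring

lemma gpart_mul (h₁ h₂ : C(OnePoint E, ℂ)) :
    gpart (h₁ * h₂) = gpart h₁ * gpart h₂ + h₁ ∞ • gpart h₂ + h₂ ∞ • gpart h₁ := by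
  ext x; simp [gpart]; ring

lemma gpart_star (h : C(OnePoint E, ℂ)) : gpart (star h) = star (gpart h) := by
  ext x; simp [gpart]

lemma gpart_algebraMap (c : ℂ) : gpart (algebraMap ℂ C(OnePoint E, ℂ) c) = 0 := by
  ext x; simp [gpart]

lemma gpart_extC0 (f : BoundedContinuousFunction E ℂ) (hf) : gpart (extC0 f hf) = f := by
  ext x; simp [gpart]
noncomputable def Salg (B : NonUnitalStarSubalgebra ℂ (BoundedContinuousFunction E ℂ)) :
    StarSubalgebra ℂ C(OnePoint E, ℂ) where
  carrier := {h | gpart h ∈ B}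
  add_mem' := fun {h₁} {h₂} m₁ m₂ => by
    simp only [Set.mem_setOf_eq, gpart_add]; exact add_mem m₁ m₂
  mul_mem' := fun {h₁} {h₂} m₁ m₂ => by
    simp only [Set.mem_setOf_eq, gpart_mul]
    exact add_mem (add_mem (mul_mem m₁ m₂) (SMulMemClass.smul_mem _ m₂))
      (SMulMemClass.smul_mem _ m₁)
  algebraMap_mem' := fun c => by
    show gpart ((algebraMap ℂ C(OnePoint E, ℂ)) c) ∈ B
    rw [gpart_algebraMap]; exact B.zero_mem
  star_mem' := fun {h} m => by
    simp only [Set.mem_setOf_eq, gpart_star]; exact star_mem m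

lemma mem_Salg {B : NonUnitalStarSubalgebra ℂ (BoundedContinuousFunction E ℂ)}
    {h : C(OnePoint E, ℂ)} : h ∈ Salg B ↔ gpart h ∈ B := Iff.rfl
end main

section sep
variable {E : Type*} [NormedAddCommGroup E] [NormedSpace ℝ E] [ProperSpace E]

lemma exists_value_ne_zero {f : BoundedContinuousFunction E ℂ} (hf : f ≠ 0) :
    ∃ z, f z ≠ 0 := by
  by_contra h
  push_neg at h
  exact hf (by ext z; simpa using h z)

lemma exists_nonzero_at (B : NonUnitalStarSubalgebra ℂ (BoundedContinuousFunction E ℂ))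
    (hinv : ∀ X : E, ∀ f ∈ B, ∃ g ∈ B, ∀ Y, g Y = f (Y + X))
    {f : BoundedContinuousFunction E ℂ} (hfB : f ∈ B) (hf : f ≠ 0) (x : E) :
    ∃ g ∈ B, g x ≠ 0 := by
  obtain ⟨z, hz⟩ := exists_value_ne_zero hf
  obtain ⟨g, hgB, hg⟩ := hinv (z - x) f hfB
  refine ⟨g, hgB, ?_⟩
  rw [hg, show x + (z - x) = z by abel]
  exact hz

lemma exists_separating (B : NonUnitalStarSubalgebra ℂ (BoundedContinuousFunction E ℂ))
    (hBC0 : ∀ f ∈ B, Tendsto (f : E → ℂ) (cocompact E) (𝓝 0))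
    (hinv : ∀ X : E, ∀ f ∈ B, ∃ g ∈ B, ∀ Y, g Y = f (Y + X))
    {f : BoundedContinuousFunction E ℂ} (hfB : f ∈ B) (hf : f ≠ 0)
    {x y : E} (hxy : x ≠ y) : ∃ g ∈ B, g x ≠ g y := by
  by_contra hcon
  push_neg at hcon
  -- f is periodic with period d = y - x
  set d : E := y - x with hd
  have hdne : d ≠ 0 := sub_ne_zero.2 (Ne.symm hxy)
  have hper : ∀ w, f (w + d) = f w := by
    intro w
    obtain ⟨g, hgB, hg⟩ := hinv (w - x) f hfB
    have hgxy := hcon g hgB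
    rw [hg, hg, show x + (w - x) = w by abel, show y + (w - x) = w + d by rw [hd]; abel] at hgxy
    exact hgxy.symm
  have key : ∀ (k : ℕ) (w : E), f (w + (k : ℝ) • d) = f w := by
    intro k
    induction k with
    | zero => intro w; simp
    | succ k ih =>
      intro w
      have e : w + ((k + 1 : ℕ) : ℝ) • d = (w + d) + (k : ℝ) • d := by
        push_cast
        rw [add_smul, one_smul]
        abel
      rw [e, ih (w + d), hper w]
  -- f vanishes everywhere, contradiction
  apply hf
  ext z
  have hseq : Tendsto (fun k : ℕ => z + (k : ℝ) • d) atTop (cocompact E) := by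
    apply tendsto_cocompact_of_tendsto_dist_comp_atTop (0 : E)
    simp only [dist_zero_right]
    have lower : ∀ k : ℕ, (k : ℝ) * ‖d‖ - ‖z‖ ≤ ‖z + (k : ℝ) • d‖ := by
      intro k
      have h1 : ‖(k : ℝ) • d‖ ≤ ‖z + (k : ℝ) • d‖ + ‖z‖ := by
        calc ‖(k : ℝ) • d‖ = ‖(z + (k : ℝ) • d) - z‖ := by congr 1; abel
          _ ≤ ‖z + (k : ℝ) • d‖ + ‖z‖ := norm_sub_le _ _
      rw [norm_smul, Real.norm_natCast] at h1
      linarith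
    refine tendsto_atTop_mono lower ?_
    have h2 : Tendsto (fun k : ℕ => (k : ℝ) * ‖d‖) atTop atTop :=
      Tendsto.atTop_mul_const (norm_pos_iff.2 hdne) tendsto_natCast_atTop_atTop
    simpa [sub_eq_add_neg] using tendsto_atTop_add_const_right atTop (-‖z‖) h2
  have h0 : Tendsto (fun k : ℕ => f (z + (k : ℝ) • d)) atTop (𝓝 0) :=
    (hBC0 f hfB).comp hseq
  have hconst : (fun k : ℕ => f (z + (k : ℝ) • d)) = fun _ => f z := by
    funext k; exact key k z
  rw [hconst] at h0
  simpa using (tendsto_nhds_unique h0 tendsto_const_nhds).symm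

end sep

section dense
variable {E : Type*} [NormedAddCommGroup E] [NormedSpace ℝ E] [ProperSpace E]

lemma continuous_gpart : Continuous (gpart (E := E)) := by
  have h1 : Continuous (restr (E := E)) := lipschitz_restr.continuous
  have h2 : Continuous fun h : C(OnePoint E, ℂ) =>
      (h ∞ • 1 : BoundedContinuousFunction E ℂ) :=
    (continuous_eval_const (F := C(OnePoint E, ℂ)) (∞ : OnePoint E)).smul continuous_const
  exact h1.sub h2

lemma mem_B_of_C0 (B : NonUnitalStarSubalgebra ℂ (BoundedContinuousFunction E ℂ))
    (hclosed : IsClosed (B : Set (BoundedContinuousFunction E ℂ)))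
    (hinv : ∀ X : E, ∀ f ∈ B, ∃ g ∈ B, ∀ Y, g Y = f (Y + X))
    (hnonzero : ∃ f ∈ B, f ≠ 0)
    (hBC0 : ∀ f ∈ B, Tendsto (f : E → ℂ) (cocompact E) (𝓝 0))
    (f : BoundedContinuousFunction E ℂ)
    (hf : Tendsto (f : E → ℂ) (cocompact E) (𝓝 0)) : f ∈ B := by
  obtain ⟨f₀, hf₀B, hf₀⟩ := hnonzero
  -- the closed set W
  set W : Set C(OnePoint E, ℂ) := {h | gpart h ∈ B ∧ h ∞ = 0} with hW
  have hWclosed : IsClosed W := by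
    have h1 : IsClosed {h : C(OnePoint E, ℂ) | gpart h ∈ B} :=
      hclosed.preimage continuous_gpart
    have h2 : IsClosed {h : C(OnePoint E, ℂ) | h ∞ = 0} :=
      isClosed_singleton.preimage (continuous_eval_const (F := C(OnePoint E, ℂ)) (∞ : OnePoint E))
    exact h1.inter h2
  -- Stone-Weierstrass : Salg B is dense
  have hsep : (Salg B).SeparatesPoints := by
    intro x y hxy
    induction x using OnePoint.rec with
    | infty =>
      induction y using OnePoint.rec with
      | infty => exact absurd rfl hxy
      | coe y =>
        obtain ⟨g, hgB, hg⟩ := exists_nonzero_at B hinv hf₀B hf₀ y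
        exact ⟨_, ⟨extC0 g (hBC0 g hgB), mem_Salg.2 (by rw [gpart_extC0]; exact hgB), rfl⟩,
          by simpa using (Ne.symm hg)⟩
    | coe x =>
      induction y using OnePoint.rec with
      | infty =>
        obtain ⟨g, hgB, hg⟩ := exists_nonzero_at B hinv hf₀B hf₀ x
        exact ⟨_, ⟨extC0 g (hBC0 g hgB), mem_Salg.2 (by rw [gpart_extC0]; exact hgB), rfl⟩,
          by simpa using hg⟩
      | coe y =>
        have hxy' : x ≠ y := fun h => hxy (by rw [h])
        obtain ⟨g, hgB, hg⟩ := exists_separating B hBC0 hinv hf₀B hf₀ hxy'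
        exact ⟨_, ⟨extC0 g (hBC0 g hgB), mem_Salg.2 (by rw [gpart_extC0]; exact hgB), rfl⟩,
          by simpa using hg⟩
  have hdense : closure ((Salg B) : Set C(OnePoint E, ℂ)) = Set.univ := by
    have := ContinuousMap.starSubalgebra_topologicalClosure_eq_top_of_separatesPoints
      (Salg B) hsep
    have h2 := congrArg (fun (A : StarSubalgebra ℂ C(OnePoint E, ℂ)) =>
      (A : Set C(OnePoint E, ℂ))) this
    simpa [StarSubalgebra.topologicalClosure_coe] using h2
  -- h := extension of f belongs to closure of W = W
  set h : C(OnePoint E, ℂ) := extC0 f hf with hh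
  have hmem : h ∈ closure W := by
    rw [Metric.mem_closure_iff]
    intro ε hε
    have : h ∈ closure ((Salg B) : Set C(OnePoint E, ℂ)) := by rw [hdense]; trivial
    obtain ⟨a, haS, hdist⟩ := Metric.mem_closure_iff.1 this (ε / 2) (by positivity)
    refine ⟨a - algebraMap ℂ C(OnePoint E, ℂ) (a ∞), ⟨?_, ?_⟩, ?_⟩
    · have : gpart (a - algebraMap ℂ C(OnePoint E, ℂ) (a ∞)) = gpart a := by
        ext x
        simp [gpart, Algebra.algebraMap_eq_smul_one]
      rw [this]
      exact haS
    · simp [Algebra.algebraMap_eq_smul_one]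
    · have hb : ‖a ∞‖ ≤ dist h a := by
        have h1 : ‖(h - a) ∞‖ ≤ ‖h - a‖ := ContinuousMap.norm_coe_le_norm _ _
        have h2 : (h - a) ∞ = -(a ∞) := by simp [hh]
        rw [h2] at h1
        simpa [dist_eq_norm] using h1
      have hdaw : dist a (a - algebraMap ℂ C(OnePoint E, ℂ) (a ∞)) = ‖a ∞‖ := by
        rw [dist_eq_norm]
        have : a - (a - algebraMap ℂ C(OnePoint E, ℂ) (a ∞))
            = algebraMap ℂ C(OnePoint E, ℂ) (a ∞) := by abel
        rw [this]
        refine le_antisymm ?_ ?_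
        · refine (ContinuousMap.norm_le _ (norm_nonneg _)).2 fun x => ?_
          simp [Algebra.algebraMap_eq_smul_one]
        · have := ContinuousMap.norm_coe_le_norm
            (algebraMap ℂ C(OnePoint E, ℂ) (a ∞)) (∞ : OnePoint E)
          simpa [Algebra.algebraMap_eq_smul_one] using this
      calc dist h (a - algebraMap ℂ C(OnePoint E, ℂ) (a ∞))
          ≤ dist h a + dist a (a - algebraMap ℂ C(OnePoint E, ℂ) (a ∞)) := dist_triangle _ _ _
        _ ≤ dist h a + dist h a := by rw [hdaw]; exact add_le_add le_rfl hb
        _ < ε / 2 + ε / 2 := by exact add_lt_add hdist hdist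
        _ = ε := by ring
  rw [hWclosed.closure_eq] at hmem
  have : gpart h ∈ B := hmem.1
  rwa [hh, gpart_extC0] at this

end dense

/-- A nonzero Ξ-algebra `B` which is Ξ-simple (it contains no closed
translation-invariant two-sided (self-adjoint) ideal other than `{0}` and `B`)
is either equal to `C₀(Ξ)` or of the second kind (`B ∩ C₀(Ξ) = {0}`). -/
theorem xi_simple_algebra_czero_or_second_kind (n : ℕ)
    (B : NonUnitalStarSubalgebra ℂ
      (BoundedContinuousFunction (EuclideanSpace ℝ (Fin (2 * n))) ℂ))
    (hclosed : IsClosed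
      (B : Set (BoundedContinuousFunction (EuclideanSpace ℝ (Fin (2 * n))) ℂ)))
    (hunif : ∀ f ∈ B, UniformContinuous (f : EuclideanSpace ℝ (Fin (2 * n)) → ℂ))
    (hinv : ∀ X : EuclideanSpace ℝ (Fin (2 * n)), ∀ f ∈ B,
      ∃ g ∈ B, ∀ Y, g Y = f (Y + X))
    (hnonzero : ∃ f ∈ B, f ≠ 0)
    (hsimple : ∀ J : Set (BoundedContinuousFunction (EuclideanSpace ℝ (Fin (2 * n))) ℂ),
      J ⊆ B →
      IsClosed J →
      (0 : BoundedContinuousFunction (EuclideanSpace ℝ (Fin (2 * n))) ℂ) ∈ J →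
      (∀ f ∈ J, ∀ g ∈ J, f + g ∈ J) →
      (∀ c : ℂ, ∀ f ∈ J, c • f ∈ J) →
      (∀ f ∈ J, star f ∈ J) →
      (∀ f ∈ B, ∀ g ∈ J, f * g ∈ J ∧ g * f ∈ J) →
      (∀ X : EuclideanSpace ℝ (Fin (2 * n)), ∀ f ∈ J,
        ∃ g ∈ J, ∀ Y, g Y = f (Y + X)) →
      J = {0} ∨ J = (B : Set (BoundedContinuousFunction (EuclideanSpace ℝ (Fin (2 * n))) ℂ))) :
    ((B : Set (BoundedContinuousFunction (EuclideanSpace ℝ (Fin (2 * n))) ℂ)) =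
      {f : BoundedContinuousFunction (EuclideanSpace ℝ (Fin (2 * n))) ℂ |
        Tendsto (f : EuclideanSpace ℝ (Fin (2 * n)) → ℂ)
        (cocompact (EuclideanSpace ℝ (Fin (2 * n)))) (𝓝 0)}) ∨
    (∀ f ∈ B,
      Tendsto (f : EuclideanSpace ℝ (Fin (2 * n)) → ℂ)
        (cocompact (EuclideanSpace ℝ (Fin (2 * n)))) (𝓝 0) → f = 0) := by
  set E := EuclideanSpace ℝ (Fin (2 * n)) with hE
  set C0 : Set (BoundedContinuousFunction E ℂ) :=
    {f | Tendsto (f : E → ℂ) (cocompact E) (𝓝 0)} with hC0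
  set J : Set (BoundedContinuousFunction E ℂ) := ↑B ∩ C0 with hJdef
  have hzero : (0 : BoundedContinuousFunction E ℂ) ∈ J := by
    refine ⟨B.zero_mem, ?_⟩
    show Tendsto ((0 : BoundedContinuousFunction E ℂ) : E → ℂ) (cocompact E) (𝓝 0)
    exact (tendsto_const_nhds : Tendsto (fun _ : E => (0 : ℂ)) (cocompact E) (𝓝 0))
  have hJ := hsimple J Set.inter_subset_left (hclosed.inter isClosed_C0set) hzero
    (fun f hf g hg => ⟨add_mem hf.1 hg.1, by
      have := hf.2.add hg.2
      simpa [hC0, Pi.add_def] using this⟩)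
    (fun c f hf => ⟨SMulMemClass.smul_mem c hf.1, by
      have := hf.2.const_smul c
      simpa [hC0] using this⟩)
    (fun f hf => ⟨star_mem hf.1, by
      have : Tendsto (fun x => star (f x)) (cocompact E) (𝓝 (star (0 : ℂ))) :=
        (continuous_star.tendsto (0 : ℂ)).comp hf.2
      simpa [hC0, Pi.star_def] using this⟩)
    (fun f hf g hg => by
      have hmul : Tendsto ((f * g : BoundedContinuousFunction E ℂ) : E → ℂ)
          (cocompact E) (𝓝 0) := by
        refine squeeze_zero_norm (a := fun x => ‖f‖ * ‖g x‖) ?_ ?_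
        · intro x
          show ‖f x * g x‖ ≤ ‖f‖ * ‖g x‖
          rw [norm_mul]
          exact mul_le_mul_of_nonneg_right (BoundedContinuousFunction.norm_coe_le_norm f x)
            (norm_nonneg _)
        · have := (hg.2.norm).const_mul ‖f‖
          simpa using this
      exact ⟨⟨mul_mem hf hg.1, hmul⟩, ⟨mul_mem hg.1 hf, hmul.congr fun x => mul_comm (f x) (g x)⟩⟩)
    (fun X f hf => by
      obtain ⟨g, hgB, hg⟩ := hinv X f hf.1
      exact ⟨g, ⟨hgB, translate_C0 X hf.2 hg⟩, hg⟩)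
  rcases hJ with hJ | hJ
  · right
    intro f hfB hf0
    have : f ∈ J := ⟨hfB, hf0⟩
    rw [hJ] at this
    exact this
  · left
    have hBC0 : ∀ f ∈ B, Tendsto (f : E → ℂ) (cocompact E) (𝓝 0) := by
      intro f hfB
      have : f ∈ J := by rw [hJ]; exact hfB
      exact this.2
    refine Set.Subset.antisymm (fun f hfB => hBC0 f hfB) (fun f hf => ?_)
    exact mem_B_of_C0 B hclosed hinv hnonzero hBC0 f hf
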